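/- Suppose f(z) = z^{a₁} + ⋯ + z^{aₙ} and g(z) = z^{b₁} + ⋯ + z^{bₘ} are Newman polynomials (distinct nonnegative integer exponents, all coefficients 1) with |f(z)| ≥ K₁ and |g(z)| ≥ K₂ for all complex z with |z| = 1. Then there exists a Newman polynomial h with exactly nm terms such that |h(z)| ≥ K₁K₂ for all |z| = 1. -/

import Mathlib

theorem stmt_13 (n m : ℕ) (A B : Finset ℕ) (hA : A.card = n) (hB : B.card = m)
    (K₁ K₂ : ℝ) (hK₁ : 0 ≤ K₁) (hK₂ : 0 ≤ K₂)
    (hf : ∀ z : ℂ, ‖z‖ = 1 → K₁ ≤ ‖∑ i ∈ A, z ^ i‖)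
    (hg : ∀ z : ℂ, ‖z‖ = 1 → K₂ ≤ ‖∑ i ∈ B, z ^ i‖) :
    ∃ C : Finset ℕ, C.card = n * m ∧
      ∀ z : ℂ, ‖z‖ = 1 → K₁ * K₂ ≤ ‖∑ i ∈ C, z ^ i‖ := by
  set k : ℕ := B.sup id + 1 with hk
  have hbk : ∀ b ∈ B, b < k := fun b hb =>
    Nat.lt_succ_of_le (Finset.le_sup (f := id) hb)
  have hinj : ∀ p ∈ A ×ˢ B, ∀ q ∈ A ×ˢ B,
      (fun p : ℕ × ℕ => k * p.1 + p.2) p = (fun p : ℕ × ℕ => k * p.1 + p.2) q → p = q := by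
    rintro ⟨a, b⟩ hab ⟨a', b'⟩ hab' h
    simp only [Finset.mem_product] at hab hab'
    simp only at h
    have hb : b < k := hbk b hab.2
    have hb' : b' < k := hbk b' hab'.2
    have hmod : (k * a + b) % k = (k * a' + b') % k := by rw [h]
    rw [Nat.mul_add_mod, Nat.mul_add_mod, Nat.mod_eq_of_lt hb, Nat.mod_eq_of_lt hb'] at hmod
    subst hmod
    have : k * a = k * a' := by omega
    have hkpos : 0 < k := Nat.succ_pos _
    have : a = a' := Nat.eq_of_mul_eq_mul_left hkpos this
    simp [this]
  refine ⟨(A ×ˢ B).image (fun p : ℕ × ℕ => k * p.1 + p.2), ?_, ?_⟩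
  · rw [Finset.card_image_of_injOn hinj, Finset.card_product, hA, hB]
  · intro z hz
    have hsum : (∑ i ∈ (A ×ˢ B).image (fun p : ℕ × ℕ => k * p.1 + p.2), z ^ i)
        = (∑ i ∈ A, (z ^ k) ^ i) * (∑ j ∈ B, z ^ j) := by
      rw [Finset.sum_image hinj, Finset.sum_mul_sum, Finset.sum_product]
      simp [pow_add, pow_mul]
    rw [hsum, norm_mul]
    have hzk : ‖z ^ k‖ = 1 := by rw [norm_pow, hz, one_pow]
    exact mul_le_mul (hf _ hzk) (hg _ hz) hK₂ (norm_nonneg _)
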